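/- Let n be a positive integer and let f, h : EuclideanSpace ℝ (Fin n) → ℝ be C² functions with compact support. Then Green's second identity holds: ∫_{ℝⁿ} ( h(x)·Δf(x) − f(x)·Δh(x) ) dx = 0, where Δ denotes the Euclidean Laplacian Δf = Σ_{i=1}^n ∂²f/∂x_i². -/

import Mathlib

open Real MeasureTheory

/-- The Euclidean Laplacian `Δf(x) = Σᵢ ∂²f/∂xᵢ²(x)` of `f : ℝⁿ → ℝ`. -/
noncomputable def euclideanLaplacian {n : ℕ} (f : EuclideanSpace ℝ (Fin n) → ℝ)
    (x : EuclideanSpace ℝ (Fin n)) : ℝ :=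
  ∑ i : Fin n,
    fderiv ℝ (fun y => fderiv ℝ f y (EuclideanSpace.single i 1)) x
      (EuclideanSpace.single i 1)

section aux

variable {E : Type*} [NormedAddCommGroup E] [InnerProductSpace ℝ E]
  [FiniteDimensional ℝ E] [MeasurableSpace E] [BorelSpace E]

lemma contDiff_dfv {f : E → ℝ} (hf : ContDiff ℝ 2 f) (v : E) :
    ContDiff ℝ 1 (fun y => fderiv ℝ f y v) :=
  (hf.fderiv_right (by norm_num)).clm_apply contDiff_const

lemma hcs_dfv {f : E → ℝ} (hfs : HasCompactSupport f) (v : E) :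
    HasCompactSupport (fun y => fderiv ℝ f y v) :=
  hfs.fderiv_apply (𝕜 := ℝ) v

lemma key (f h : E → ℝ) (hf : ContDiff ℝ 2 f) (hh : ContDiff ℝ 2 h)
    (hfs : HasCompactSupport f) (hhs : HasCompactSupport h) (v : E) :
    ∫ x, h x * fderiv ℝ (fun y => fderiv ℝ f y v) x v =
      - ∫ x, fderiv ℝ h x v * fderiv ℝ f x v := by
  have hDf : ContDiff ℝ 1 (fun y => fderiv ℝ f y v) := contDiff_dfv hf v
  have hDfs : HasCompactSupport (fun y => fderiv ℝ f y v) := hcs_dfv hfs v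
  have hDDfs : HasCompactSupport (fun y => fderiv ℝ (fun z => fderiv ℝ f z v) y v) :=
    hcs_dfv (f := fun y => fderiv ℝ f y v) hDfs v
  have cDh : Continuous (fun y => fderiv ℝ h y v) := (contDiff_dfv hh v).continuous
  have cDf : Continuous (fun y => fderiv ℝ f y v) := hDf.continuous
  have cDDf : Continuous (fun y => fderiv ℝ (fun z => fderiv ℝ f z v) y v) :=
    ((hDf.fderiv_right (m := 0) (by norm_num)).clm_apply contDiff_const).continuous
  exact integral_mul_fderiv_eq_neg_fderiv_mul_of_integrable
    ((cDh.mul cDf).integrable_of_hasCompactSupport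
      (hDfs.mul_left (f := fun y => fderiv ℝ h y v)))
    ((hh.continuous.mul cDDf).integrable_of_hasCompactSupport
      (hhs.mul_right (f' := fun y => fderiv ℝ (fun z => fderiv ℝ f z v) y v)))
    ((hh.continuous.mul cDf).integrable_of_hasCompactSupport
      (hhs.mul_right (f' := fun y => fderiv ℝ f y v)))
    (fun x _ => hh.differentiable (by norm_num) x) (fun x _ => hDf.differentiable (by norm_num) x)

end aux

/-- **Green's second identity.** For `f, h` `C²` functions on `ℝⁿ` with
compact support, `∫ (h·Δf − f·Δh) dx = 0`. -/
theorem stmt_14 (n : ℕ) (hn : 0 < n)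
    (f h : EuclideanSpace ℝ (Fin n) → ℝ)
    (hf : ContDiff ℝ 2 f) (hh : ContDiff ℝ 2 h)
    (hfsupp : HasCompactSupport f) (hhsupp : HasCompactSupport h) :
    ∫ x, (h x * euclideanLaplacian f x - f x * euclideanLaplacian h x) = 0 := by
  have cLf : Continuous (euclideanLaplacian f) := by
    apply continuous_finset_sum
    intro i _
    exact ((contDiff_dfv hf _).fderiv_right (m := 0) (by norm_num)).continuous.clm_apply
      continuous_const
  have cLh : Continuous (euclideanLaplacian h) := by
    apply continuous_finset_sum
    intro i _
    exact ((contDiff_dfv hh _).fderiv_right (m := 0) (by norm_num)).continuous.clm_apply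
      continuous_const
  have i1 : Integrable (fun x => h x * euclideanLaplacian f x) :=
    (hh.continuous.mul cLf).integrable_of_hasCompactSupport
      (hhsupp.mul_right (f' := euclideanLaplacian f))
  have i2 : Integrable (fun x => f x * euclideanLaplacian h x) :=
    (hf.continuous.mul cLh).integrable_of_hasCompactSupport
      (hfsupp.mul_right (f' := euclideanLaplacian h))
  rw [integral_sub i1 i2, sub_eq_zero]
  have exp : ∀ (g : EuclideanSpace ℝ (Fin n) → ℝ) (x),
      g x * euclideanLaplacian f x = g x * euclideanLaplacian f x := fun _ _ => rfl
  have hi : ∀ (u w : EuclideanSpace ℝ (Fin n) → ℝ), ContDiff ℝ 2 u → ContDiff ℝ 2 w →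
      HasCompactSupport u → HasCompactSupport w → ∀ i : Fin n,
      Integrable (fun x => w x *
        fderiv ℝ (fun y => fderiv ℝ u y (EuclideanSpace.single i 1)) x
          (EuclideanSpace.single i 1)) := by
    intro u w hu hw hus hws i
    exact (hw.continuous.mul
        (((contDiff_dfv hu _).fderiv_right (m := 0) (by norm_num)).continuous.clm_apply
          continuous_const)).integrable_of_hasCompactSupport
      (hws.mul_right (f' := fun x =>
        fderiv ℝ (fun y => fderiv ℝ u y (EuclideanSpace.single i 1)) x
          (EuclideanSpace.single i 1)))
  calc ∫ x, h x * euclideanLaplacian f x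
      = ∑ i : Fin n, ∫ x, h x *
          fderiv ℝ (fun y => fderiv ℝ f y (EuclideanSpace.single i 1)) x
            (EuclideanSpace.single i 1) := by
        rw [← integral_finset_sum _ (fun i _ => hi f h hf hh hfsupp hhsupp i)]
        congr 1; ext x; simp [euclideanLaplacian, Finset.mul_sum]
    _ = ∑ i : Fin n, ∫ x, f x *
          fderiv ℝ (fun y => fderiv ℝ h y (EuclideanSpace.single i 1)) x
            (EuclideanSpace.single i 1) := by
        refine Finset.sum_congr rfl fun i _ => ?_
        rw [key f h hf hh hfsupp hhsupp, key h f hh hf hhsupp hfsupp]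
        congr 1
        apply integral_congr_ae
        filter_upwards with x
        ring
    _ = ∫ x, f x * euclideanLaplacian h x := by
        rw [← integral_finset_sum _ (fun i _ => hi h f hh hf hhsupp hfsupp i)]
        congr 1; ext x; simp [euclideanLaplacian, Finset.mul_sum]
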